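/- Let E be a finite-dimensional real inner product space, F : E → ℝ differentiable with gradient ∇F, and β, μ ≥ 0 such that for all u, v ∈ E: ‖∇F(u) − ∇F(v)‖ ≤ β‖u − v‖ and ‖∇F(u) − ∇F(v)‖ ≥ μ‖u − v‖. Let η ≥ 0 and c ∈ ℝ. On a probability space Ω, let x ∈ E be fixed, let X̃ : Ω → E be a square-integrable random vector, and let N : Ω → E be a square-integrable random vector independent of X̃ with E[N] = 0 and E‖N‖² = σ². Define Δ := X̃ − x and Δ' := Δ − η·(∇F(X̃) − ∇F(x)) + c·N. Then E‖Δ'‖² ≥ (1 − 2ηβ + η²μ²)·E‖Δ‖² + c²·σ². -/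

import Mathlib

open MeasureTheory ProbabilityTheory RealInnerProductSpace

/-- Two `MemLp _ 2` functions have an integrable inner product. -/
lemma memLp_two_integrable_inner {E : Type*} [NormedAddCommGroup E] [InnerProductSpace ℝ E]
    {Ω : Type*} [MeasurableSpace Ω] {P : Measure Ω} {f g : Ω → E}
    (hf : MemLp f 2 P) (hg : MemLp g 2 P) :
    Integrable (fun ω => ⟪f ω, g ω⟫) P := by
  have h := MeasureTheory.L2.integrable_inner (𝕜 := ℝ) (hf.toLp f) (hg.toLp g)
  refine h.congr ?_
  filter_upwards [hf.coeFn_toLp, hg.coeFn_toLp] with ω h1 h2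
  simp [h1, h2]

/-- Per-round recursion inequality in the cumulative variance theorem: with
`Δ = X̃ − x` and `Δ' = Δ − η•(∇F(X̃) − ∇F(x)) + c•N` where `N` is independent of `X̃`,
mean zero, with `E‖N‖² = σ²`, one has
`E‖Δ'‖² ≥ (1 − 2ηβ + η²μ²)·E‖Δ‖² + c²σ²`. -/
theorem per_round_recursion
    {E : Type*} [NormedAddCommGroup E] [InnerProductSpace ℝ E]
    [FiniteDimensional ℝ E] [MeasurableSpace E] [BorelSpace E]
    {Ω : Type*} [MeasurableSpace Ω] (P : Measure Ω) [IsProbabilityMeasure P]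
    (F : E → ℝ) (G : E → E) (hF : ∀ u : E, HasGradientAt F (G u) u)
    (β μ : ℝ) (hβ : 0 ≤ β) (hμ : 0 ≤ μ)
    (hsmooth : ∀ u v : E, ‖G u - G v‖ ≤ β * ‖u - v‖)
    (hconv : ∀ u v : E, μ * ‖u - v‖ ≤ ‖G u - G v‖)
    (η : ℝ) (hη : 0 ≤ η) (c σ : ℝ)
    (x : E) (Xt N : Ω → E)
    (hXt : MemLp Xt 2 P) (hN : MemLp N 2 P)
    (hindep : IndepFun N Xt P)
    (hmean : ∫ ω, N ω ∂P = 0) (hvar : ∫ ω, ‖N ω‖ ^ 2 ∂P = σ ^ 2) :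
    (1 - 2 * η * β + η ^ 2 * μ ^ 2) * (∫ ω, ‖Xt ω - x‖ ^ 2 ∂P) + c ^ 2 * σ ^ 2 ≤
      ∫ ω, ‖(Xt ω - x) - η • (G (Xt ω) - G x) + c • N ω‖ ^ 2 ∂P := by
  classical
  -- G is continuous (it is β-Lipschitz)
  have hGcont : Continuous G := by
    refine (LipschitzWith.of_dist_le_mul (K := β.toNNReal) fun u v => ?_).continuous
    rw [Real.coe_toNNReal β hβ, dist_eq_norm, dist_eq_norm]
    exact hsmooth u v
  set φ : E → E := fun u => (u - x) - η • (G u - G x) with hφ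
  have hφcont : Continuous φ :=
    ((continuous_id.sub continuous_const).sub
      (((hGcont.sub continuous_const)).const_smul η))
  -- measurability / integrability infrastructure
  have hXtm : AEStronglyMeasurable Xt P := hXt.aestronglyMeasurable
  have hΔ : MemLp (fun ω => Xt ω - x) 2 P := hXt.sub (memLp_const x)
  have hfmeas : AEStronglyMeasurable (fun ω => φ (Xt ω)) P :=
    hφcont.comp_aestronglyMeasurable hXtm
  have hf : MemLp (fun ω => φ (Xt ω)) 2 P := by
    refine MemLp.of_le (hΔ.const_smul (1 + η * β)) hfmeas ?_
    filter_upwards with ω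
    have h1 : ‖φ (Xt ω)‖ ≤ ‖Xt ω - x‖ + η * (β * ‖Xt ω - x‖) := by
      refine (norm_sub_le _ _).trans ?_
      gcongr
      rw [norm_smul, Real.norm_of_nonneg hη]
      exact mul_le_mul_of_nonneg_left (hsmooth (Xt ω) x) hη
    have h2 : ‖(1 + η * β) • (Xt ω - x)‖ = (1 + η * β) * ‖Xt ω - x‖ := by
      rw [norm_smul, Real.norm_of_nonneg (by positivity)]
    simp only [Pi.smul_apply]
    rw [h2]
    nlinarith [norm_nonneg (Xt ω - x)]
  have hcN : MemLp (fun ω => c • N ω) 2 P := hN.const_smul c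
  -- the cross term vanishes by independence
  have hcross : ∫ ω, ⟪φ (Xt ω), N ω⟫ ∂P = 0 := by
    have hb := stdOrthonormalBasis ℝ E
    set b := stdOrthonormalBasis ℝ E
    have hsum : ∀ ω, ⟪φ (Xt ω), N ω⟫ =
        ∑ i, ⟪φ (Xt ω), b i⟫ * ⟪b i, N ω⟫ := fun ω =>
      (b.sum_inner_mul_inner _ _).symm
    simp_rw [hsum]
    rw [integral_finset_sum]
    · refine Finset.sum_eq_zero fun i _ => ?_
      have hNi : ∫ ω, ⟪b i, N ω⟫ ∂P = 0 := by
        have := (innerSL ℝ (b i)).integral_comp_comm (hN.integrable (by norm_num))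
        simpa [hmean] using this
      have hmeas1 : Measurable fun u : E => ⟪φ u, b i⟫ :=
        (continuous_inner.comp (hφcont.prodMk continuous_const)).measurable
      have hmeas2 : Measurable fun y : E => ⟪b i, y⟫ :=
        (continuous_inner.comp (continuous_const.prodMk continuous_id)).measurable
      have hind : IndepFun (fun ω => ⟪b i, N ω⟫) (fun ω => ⟪φ (Xt ω), b i⟫) P :=
        hindep.comp hmeas2 hmeas1
      have h2 := hind.integral_mul_eq_mul_integral
        (hmeas2.comp_aemeasurable hN.aestronglyMeasurable.aemeasurable).aestronglyMeasurable
        (hmeas1.comp_aemeasurable hXt.aestronglyMeasurable.aemeasurable).aestronglyMeasurable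
      calc ∫ ω, ⟪φ (Xt ω), b i⟫ * ⟪b i, N ω⟫ ∂P
          = ∫ ω, ⟪b i, N ω⟫ * ⟪φ (Xt ω), b i⟫ ∂P := by simp_rw [mul_comm]
        _ = (∫ ω, ⟪b i, N ω⟫ ∂P) * ∫ ω, ⟪φ (Xt ω), b i⟫ ∂P := h2
        _ = 0 := by rw [hNi, zero_mul]
    · intro i _
      have h1 : MemLp (fun ω => ⟪φ (Xt ω), b i⟫) 2 P := by
        refine MemLp.of_le hf.norm ?_ ?_
        · exact (Continuous.comp (continuous_inner.comp
            (hφcont.prodMk continuous_const)) continuous_id).comp_aestronglyMeasurable hXtm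
        · filter_upwards with ω
          simpa using (abs_real_inner_le_norm (φ (Xt ω)) (b i)).trans
            (by simpa using mul_le_of_le_one_right (norm_nonneg _) (by simp [b.orthonormal.1 i]))
      have h2 : MemLp (fun ω => ⟪b i, N ω⟫) 2 P := by
        refine MemLp.of_le hN.norm ?_ ?_
        · exact (continuous_inner.comp
            (continuous_const.prodMk continuous_id)).comp_aestronglyMeasurable
            hN.aestronglyMeasurable
        · filter_upwards with ω
          simpa using (abs_real_inner_le_norm (b i) (N ω)).trans
            (by simpa using mul_le_of_le_one_left (norm_nonneg _) (by simp [b.orthonormal.1 i]))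
      simpa [mul_comm] using memLp_two_integrable_inner (E := ℝ) h1 h2
  -- expand the square
  have hexp : ∀ ω, ‖φ (Xt ω) + c • N ω‖ ^ 2 =
      ‖φ (Xt ω)‖ ^ 2 + (2 * c) * ⟪φ (Xt ω), N ω⟫ + c ^ 2 * ‖N ω‖ ^ 2 := by
    intro ω
    rw [norm_add_sq_real, real_inner_smul_right, norm_smul, Real.norm_eq_abs, mul_pow, sq_abs]
    ring
  have hint_f2 : Integrable (fun ω => ‖φ (Xt ω)‖ ^ 2) P := hf.norm.integrable_sq
  have hint_N2 : Integrable (fun ω => ‖N ω‖ ^ 2) P := hN.norm.integrable_sq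
  have hint_cross : Integrable (fun ω => ⟪φ (Xt ω), N ω⟫) P :=
    memLp_two_integrable_inner hf hN
  have hΔ2 : Integrable (fun ω => ‖Xt ω - x‖ ^ 2) P := hΔ.norm.integrable_sq
  have hsplit : ∫ ω, ‖φ (Xt ω) + c • N ω‖ ^ 2 ∂P =
      (∫ ω, ‖φ (Xt ω)‖ ^ 2 ∂P) + c ^ 2 * σ ^ 2 := by
    simp_rw [hexp]
    have hA : Integrable (fun ω => ‖φ (Xt ω)‖ ^ 2 + (2 * c) * ⟪φ (Xt ω), N ω⟫) P :=
      hint_f2.add (hint_cross.const_mul _)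
    have hB : Integrable (fun ω => c ^ 2 * ‖N ω‖ ^ 2) P := hint_N2.const_mul _
    rw [integral_add hA hB, integral_add hint_f2 (hint_cross.const_mul _), integral_const_mul,
      integral_const_mul, hcross, hvar, mul_zero, add_zero]
  -- pointwise deterministic inequality
  have hpt : ∀ ω, (1 - 2 * η * β + η ^ 2 * μ ^ 2) * ‖Xt ω - x‖ ^ 2 ≤ ‖φ (Xt ω)‖ ^ 2 := by
    intro ω
    set d := Xt ω - x
    set g := G (Xt ω) - G x
    have hexp2 : ‖d - η • g‖ ^ 2 = ‖d‖ ^ 2 - 2 * η * ⟪d, g⟫ + η ^ 2 * ‖g‖ ^ 2 := by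
      rw [norm_sub_sq_real, real_inner_smul_right, norm_smul, Real.norm_of_nonneg hη]
      ring
    have h1 : ⟪d, g⟫ ≤ β * ‖d‖ ^ 2 := by
      calc ⟪d, g⟫ ≤ ‖d‖ * ‖g‖ := real_inner_le_norm d g
        _ ≤ ‖d‖ * (β * ‖d‖) := by
            exact mul_le_mul_of_nonneg_left (hsmooth (Xt ω) x) (norm_nonneg d)
        _ = β * ‖d‖ ^ 2 := by ring
    have h2 : μ ^ 2 * ‖d‖ ^ 2 ≤ ‖g‖ ^ 2 := by
      have := hconv (Xt ω) x
      nlinarith [norm_nonneg d, norm_nonneg g, mul_nonneg hμ (norm_nonneg d)]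
    show _ ≤ ‖d - η • g‖ ^ 2
    rw [hexp2]
    nlinarith [sq_nonneg η, sq_nonneg (‖d‖)]
  -- integrate
  have hmono : (1 - 2 * η * β + η ^ 2 * μ ^ 2) * (∫ ω, ‖Xt ω - x‖ ^ 2 ∂P) ≤
      ∫ ω, ‖φ (Xt ω)‖ ^ 2 ∂P := by
    rw [← integral_const_mul]
    exact integral_mono (hΔ2.const_mul _) hint_f2 hpt
  calc (1 - 2 * η * β + η ^ 2 * μ ^ 2) * (∫ ω, ‖Xt ω - x‖ ^ 2 ∂P) + c ^ 2 * σ ^ 2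
      ≤ (∫ ω, ‖φ (Xt ω)‖ ^ 2 ∂P) + c ^ 2 * σ ^ 2 := by linarith
    _ = ∫ ω, ‖φ (Xt ω) + c • N ω‖ ^ 2 ∂P := hsplit.symm
    _ = _ := rfl
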